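/- Let {X_n} satisfy AIM(x_n) with separation sequence q_n and mixing coefficients α_n, suppose n·F̄(x_n) → τ > 0, let (p_n) be positive integers with p_n = o(n), n·α_n = o(p_n), q_n = o(p_n), and assume P(M_n ≤ x_n) → L for some L ∈ (0,1). Let (s_n) be positive integers with p_n = o(s_n) and s_n = o(n), and set t_n = ⌊n/(s_n+q_n)⌋, X^i_j = X_{(i−1)(s_n+q_n)+j} and M^i_{j,k} = max{X^i_{j+1},…,X^i_k}. Then ∑_{i=1}^{t_n} P(M^i_{0,s_n−p_n} > x_n, M^i_{s_n−p_n,s_n} ≤ x_n) → −log L and ∑_{i=1}^{t_n} P(M^i_{s_n−p_n,s_n} > x_n) → 0 as n → ∞; in particular the second sum is o(the first sum). -/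

import Mathlib

open MeasureTheory Filter Finset Asymptotics

/-- Probability of an event as a real number. -/
noncomputable def pr {Ω : Type*} [MeasurableSpace Ω] (P : Measure Ω) (A : Set Ω) : ℝ :=
  (P A).toReal

/-- The event that `X i ≤ x` for every index `i` in the set `S`;
this is the event `{M(S) ≤ x}` where `M(S) = max {X i : i ∈ S}`. -/
def allLe {Ω : Type*} (X : ℕ → Ω → ℝ) (S : Set ℕ) (x : ℝ) : Set Ω :=
  {ω | ∀ i ∈ S, X i ω ≤ x}

/-- `α` is a sequence of AIM mixing coefficients for `X` relative to thresholds `xs`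
with separation sequence `q`: for any two intervals `I₁ = [a,b]`, `I₂ = [b+qₙ+1, c]`
contained in `{1,…,n}`, separated by `qₙ`, each of cardinality at least `qₙ`,
the maximum-based discrepancy is bounded by `α n`. -/
def AIMBound {Ω : Type*} [MeasurableSpace Ω] (P : Measure Ω) (X : ℕ → Ω → ℝ)
    (xs : ℕ → ℝ) (q : ℕ → ℕ) (α : ℕ → ℝ) : Prop :=
  ∀ n a b c : ℕ, 1 ≤ a → a ≤ b → b + q n + 1 ≤ c → c ≤ n →
    q n ≤ b + 1 - a → q n ≤ c - (b + q n) →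
    |pr P (allLe X (Set.Icc a b ∪ Set.Icc (b + q n + 1) c) (xs n)) -
      pr P (allLe X (Set.Icc a b) (xs n)) *
        pr P (allLe X (Set.Icc (b + q n + 1) c) (xs n))| ≤ α n

open scoped ENNReal
set_option linter.unusedSectionVars false
set_option linter.unusedVariables false
set_option maxHeartbeats 1000000

section Helpers

variable {Ω : Type*} [MeasurableSpace Ω] {P : Measure Ω} [IsProbabilityMeasure P]
  {X : ℕ → Ω → ℝ} {x : ℝ}

lemma allLe_meas (hmeas : ∀ i, Measurable (X i)) (S : Set ℕ) :
    MeasurableSet (allLe X S x) := by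
  have h : allLe X S x = ⋂ i ∈ S, {ω | X i ω ≤ x} := by
    ext ω; simp [allLe]
  rw [h]
  exact MeasurableSet.biInter (Set.to_countable S)
    (fun i _ => measurableSet_le (hmeas i) measurable_const)

lemma allLe_mono {A B : Set ℕ} (h : A ⊆ B) : allLe X B x ⊆ allLe X A x :=
  fun ω hω i hi => hω i (h hi)

lemma pr_nonneg {A : Set Ω} : 0 ≤ pr P A := ENNReal.toReal_nonneg

lemma pr_le_one {A : Set Ω} : pr P A ≤ 1 := by
  have h : P A ≤ 1 := prob_le_one
  calc (P A).toReal ≤ (1 : ℝ≥0∞).toReal := ENNReal.toReal_mono ENNReal.one_ne_top h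
    _ = 1 := by simp

lemma pr_mono {A B : Set Ω} (h : A ⊆ B) : pr P A ≤ pr P B :=
  ENNReal.toReal_mono (measure_ne_top P B) (measure_mono h)

lemma pr_univ : pr P (Set.univ : Set Ω) = 1 := by simp [pr]

lemma pr_compl {A : Set Ω} (hA : MeasurableSet A) : pr P Aᶜ = 1 - pr P A := by
  rw [pr, measure_compl hA (measure_ne_top _ _), measure_univ,
    ENNReal.toReal_sub_of_le prob_le_one ENNReal.one_ne_top]
  simp [pr]

lemma pr_diff {A B : Set Ω} (h : B ⊆ A) (hB : MeasurableSet B) :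
    pr P (A \ B) = pr P A - pr P B := by
  rw [pr, measure_diff h hB.nullMeasurableSet (measure_ne_top _ _),
    ENNReal.toReal_sub_of_le (measure_mono h) (measure_ne_top _ _)]
  rfl

lemma pr_union_le {A B : Set Ω} : pr P (A ∪ B) ≤ pr P A + pr P B := by
  have := measure_union_le (μ := P) A B
  calc (P (A ∪ B)).toReal ≤ (P A + P B).toReal :=
        ENNReal.toReal_mono (by finiteness) this
    _ = pr P A + pr P B := ENNReal.toReal_add (measure_ne_top _ _) (measure_ne_top _ _)

lemma pr_biUnion_le (sf : Finset ℕ) (E : ℕ → Set Ω) :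
    pr P (⋃ i ∈ sf, E i) ≤ ∑ i ∈ sf, pr P (E i) := by
  have h := measure_biUnion_finset_le (μ := P) sf E
  calc (P (⋃ i ∈ sf, E i)).toReal ≤ (∑ i ∈ sf, P (E i)).toReal :=
        ENNReal.toReal_mono (ENNReal.sum_ne_top.2 (fun i _ => measure_ne_top _ _)) h
    _ = ∑ i ∈ sf, pr P (E i) := ENNReal.toReal_sum (fun i _ => measure_ne_top _ _)

lemma pr_gt {F : ℝ → ℝ} (hmeas : ∀ i, Measurable (X i))
    (hF : ∀ i, 1 ≤ i → ∀ t : ℝ, pr P {ω | X i ω ≤ t} = F t)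
    {i : ℕ} (hi : 1 ≤ i) : pr P {ω | x < X i ω} = 1 - F x := by
  have h : {ω | x < X i ω} = {ω | X i ω ≤ x}ᶜ := by
    ext ω; simp [not_le]
  rw [h, pr_compl (measurableSet_le (hmeas i) measurable_const), hF i hi x]

lemma pr_allLe_drop {F : ℝ → ℝ} (hmeas : ∀ i, Measurable (X i))
    (hF : ∀ i, 1 ≤ i → ∀ t : ℝ, pr P {ω | X i ω ≤ t} = F t)
    (A B : Finset ℕ) (hAB : A ⊆ B) (hB1 : ∀ i ∈ B, 1 ≤ i) :
    pr P (allLe X ↑A x) ≤ pr P (allLe X ↑B x) + (B \ A).card * (1 - F x) := by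
  have hsub : allLe X ↑A x ⊆ allLe X ↑B x ∪ (allLe X ↑A x \ allLe X ↑B x) := by
    intro ω hω
    by_cases hb : ω ∈ allLe X ↑B x
    · exact Or.inl hb
    · exact Or.inr ⟨hω, hb⟩
  have hd : allLe X ↑A x \ allLe X ↑B x ⊆ ⋃ i ∈ (B \ A), {ω | x < X i ω} := by
    intro ω ⟨hA', hB'⟩
    simp only [allLe, Set.mem_setOf_eq, Finset.mem_coe, not_forall] at hB'
    obtain ⟨i, hiB, hile⟩ := hB'
    have hiA : i ∉ A := fun hiA => hile (hA' i (by exact_mod_cast hiA))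
    exact Set.mem_biUnion (Finset.mem_sdiff.2 ⟨hiB, hiA⟩) (not_le.1 hile)
  calc pr P (allLe X ↑A x)
      ≤ pr P (allLe X ↑B x ∪ (allLe X ↑A x \ allLe X ↑B x)) := pr_mono hsub
    _ ≤ pr P (allLe X ↑B x) + pr P (allLe X ↑A x \ allLe X ↑B x) := pr_union_le
    _ ≤ pr P (allLe X ↑B x) + ∑ i ∈ (B \ A), pr P {ω | x < X i ω} := by
        exact add_le_add le_rfl ((pr_mono (P := P) hd).trans (pr_biUnion_le (P := P) _ _))
    _ = pr P (allLe X ↑B x) + (B \ A).card * (1 - F x) := by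
        congr 1
        rw [Finset.sum_congr rfl (fun i hi => pr_gt hmeas hF
          (hB1 i (Finset.mem_sdiff.1 hi).1))]
        simp [mul_comm]
        ring

lemma one_sub_pr_allLe {F : ℝ → ℝ} (hmeas : ∀ i, Measurable (X i))
    (hF : ∀ i, 1 ≤ i → ∀ t : ℝ, pr P {ω | X i ω ≤ t} = F t)
    (B : Finset ℕ) (hB1 : ∀ i ∈ B, 1 ≤ i) :
    1 - pr P (allLe X ↑B x) ≤ B.card * (1 - F x) := by
  have h := pr_allLe_drop (x := x) hmeas hF ∅ B (Finset.empty_subset B) hB1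
  have he : allLe X ↑(∅ : Finset ℕ) x = Set.univ := by
    ext ω; simp [allLe]
  rw [he, pr_univ, Finset.sdiff_empty] at h
  linarith

lemma log_near {y : ℝ} (hy : 1/2 ≤ y) (hy1 : y ≤ 1) :
    |(1 - y) + Real.log y| ≤ 2 * (1 - y)^2 := by
  have hy0 : 0 < y := by linarith
  have h1 : Real.log y ≤ y - 1 := Real.log_le_sub_one_of_pos hy0
  have h2 : Real.log (1/y) ≤ 1/y - 1 := Real.log_le_sub_one_of_pos (by positivity)
  rw [one_div, Real.log_inv] at h2
  have h3 : y⁻¹ - 1 = (1-y)/y := by field_simp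
  rw [h3] at h2
  have h4 : (1-y)/y ≤ (1-y) + 2*(1-y)^2 := by
    rw [div_le_iff₀ hy0]; nlinarith
  rw [abs_le]
  constructor
  · linarith
  · nlinarith [sq_nonneg (1-y)]

end Helpers

lemma chain_bound {Ω : Type*} [MeasurableSpace Ω] (P : Measure Ω) [IsProbabilityMeasure P]
    (X : ℕ → Ω → ℝ) (F : ℝ → ℝ) (xs : ℕ → ℝ) (q : ℕ → ℕ) (α : ℕ → ℝ)
    (hmeas : ∀ i, Measurable (X i))
    (hF : ∀ i, 1 ≤ i → ∀ t : ℝ, pr P {ω | X i ω ≤ t} = F t)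
    (hbd : AIMBound P X xs q α)
    (n sn : ℕ) (hs1 : 1 ≤ sn) (hqs : q n ≤ sn) :
    ∀ m : ℕ, m + 1 ≤ n / (sn + q n) →
      |pr P (allLe X (Set.Icc 1 (m * (sn + q n) + sn)) (xs n)) -
        ∏ i ∈ Finset.Icc 1 (m + 1), pr P (allLe X
          (Set.Icc ((i - 1) * (sn + q n) + 1) ((i - 1) * (sn + q n) + sn)) (xs n))| ≤
      m * (|α n| + (q n : ℝ) * (1 - F (xs n))) := by
  have hFb0 : 0 ≤ 1 - F (xs n) := by
    have := (hF 1 le_rfl (xs n)) ▸ (pr_le_one (P := P) (A := {ω | X 1 ω ≤ xs n}))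
    linarith
  intro m
  induction m with
  | zero =>
    intro _
    simp only [Finset.Icc_self, Finset.prod_singleton]
    norm_num
  | succ m ih =>
    intro hm1
    set k := sn + q n with hk
    have hmt : m + 1 ≤ n / k := by omega
    have IH := ih hmt
    -- abbreviations
    set b := m * k + sn with hb
    have hbq : b + q n = (m + 1) * k := by rw [hb, hk]; ring
    set g := (m + 1) * k with hg
    set c := g + sn with hc
    -- AIM bound
    have hcn : c ≤ n := by
      have h1 : (m + 2) * k ≤ (n / k) * k := Nat.mul_le_mul_right k hm1
      have h2 : (n / k) * k ≤ n := Nat.div_mul_le_self n k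
      have h3 : c ≤ (m + 2) * k := by rw [hc, hg, hk]; nlinarith [hqs]
      omega
    have haim := hbd n 1 b c le_rfl
      (by omega) (by omega) hcn (by simp; omega) (by omega)
    rw [hbq] at haim
    -- haim : |pr (allLe (Icc 1 b ∪ Icc (g+1) c)) - pr (allLe Icc 1 b) * pr (allLe Icc (g+1) c)| ≤ α n
    set W := pr P (allLe X (Set.Icc 1 b ∪ Set.Icc (g + 1) c) (xs n)) with hW
    set V := pr P (allLe X (Set.Icc 1 b) (xs n)) with hV
    set Vn := pr P (allLe X (Set.Icc 1 c) (xs n)) with hVn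
    set Q2 := pr P (allLe X (Set.Icc (g + 1) c) (xs n)) with hQ2
    -- gap bound : Vn ≤ W ≤ Vn + q * Fb
    have hsub1 : (Set.Icc 1 b ∪ Set.Icc (g + 1) c : Set ℕ) ⊆ Set.Icc 1 c := by
      intro i hi
      simp only [Set.mem_union, Set.mem_Icc] at hi ⊢
      omega
    have hVnW : Vn ≤ W := pr_mono (allLe_mono hsub1)
    have hWVn : W ≤ Vn + (q n : ℝ) * (1 - F (xs n)) := by
      have hfin : (↑(Finset.Icc 1 b ∪ Finset.Icc (g + 1) c) : Set ℕ)
          = (Set.Icc 1 b ∪ Set.Icc (g + 1) c : Set ℕ) := by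
        simp [Finset.coe_union]
      have hd := pr_allLe_drop (x := xs n) hmeas hF
        (Finset.Icc 1 b ∪ Finset.Icc (g + 1) c) (Finset.Icc 1 c)
        (by intro i hi; simp only [Finset.mem_union, Finset.mem_Icc] at hi ⊢; omega)
        (by intro i hi; simp only [Finset.mem_Icc] at hi; omega)
      rw [hfin, Finset.coe_Icc] at hd
      have hcard : (Finset.Icc 1 c \ (Finset.Icc 1 b ∪ Finset.Icc (g + 1) c)).card ≤ q n := by
        have hss : Finset.Icc 1 c \ (Finset.Icc 1 b ∪ Finset.Icc (g + 1) c)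
            ⊆ Finset.Icc (b + 1) (b + q n) := by
          intro i hi
          simp only [Finset.mem_sdiff, Finset.mem_union, Finset.mem_Icc, not_or, not_and,
            not_le] at hi
          simp only [Finset.mem_Icc]
          omega
        calc _ ≤ (Finset.Icc (b + 1) (b + q n)).card := Finset.card_le_card hss
          _ = q n := by rw [Nat.card_Icc]; omega
      have : ((Finset.Icc 1 c \ (Finset.Icc 1 b ∪ Finset.Icc (g + 1) c)).card : ℝ)
          * (1 - F (xs n)) ≤ (q n : ℝ) * (1 - F (xs n)) := by
        apply mul_le_mul_of_nonneg_right _ hFb0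
        exact_mod_cast hcard
      rw [← hW, ← hVn] at hd
      linarith
    -- product split
    have hprod : ∏ i ∈ Finset.Icc 1 (m + 2), pr P (allLe X
          (Set.Icc ((i - 1) * k + 1) ((i - 1) * k + sn)) (xs n))
        = (∏ i ∈ Finset.Icc 1 (m + 1), pr P (allLe X
          (Set.Icc ((i - 1) * k + 1) ((i - 1) * k + sn)) (xs n))) * Q2 := by
      rw [Finset.prod_Icc_succ_top (by omega : 1 ≤ m + 2)]
      congr 1
    set Pm := ∏ i ∈ Finset.Icc 1 (m + 1), pr P (allLe X
          (Set.Icc ((i - 1) * k + 1) ((i - 1) * k + sn)) (xs n)) with hPm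
    have hQ2b : 0 ≤ Q2 ∧ Q2 ≤ 1 := ⟨pr_nonneg, pr_le_one⟩
    have key : |Vn - Pm * Q2| ≤ (q n : ℝ) * (1 - F (xs n)) + |α n| + |V - Pm| := by
      have h1 : |Vn - W| ≤ (q n : ℝ) * (1 - F (xs n)) := by
        rw [abs_sub_comm, abs_of_nonneg (by linarith)]; linarith
      have h2 : |W - V * Q2| ≤ |α n| := le_trans haim (le_abs_self _)
      have h3 : |V * Q2 - Pm * Q2| ≤ |V - Pm| := by
        rw [← sub_mul, abs_mul]
        calc |V - Pm| * |Q2| ≤ |V - Pm| * 1 := by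
              apply mul_le_mul_of_nonneg_left _ (abs_nonneg _)
              rw [abs_of_nonneg hQ2b.1]; exact hQ2b.2
          _ = |V - Pm| := mul_one _
      calc |Vn - Pm * Q2| ≤ |Vn - W| + |W - V * Q2| + |V * Q2 - Pm * Q2| := by
            linarith [abs_sub_le Vn W (V*Q2), abs_sub_le Vn (V*Q2) (Pm*Q2),
              abs_sub_le W (V*Q2) (Pm*Q2)]
        _ ≤ (q n : ℝ) * (1 - F (xs n)) + |α n| + |V - Pm| := by linarith
    -- conclude
    have hVeq : pr P (allLe X (Set.Icc 1 ((m + 1) * k + sn)) (xs n)) = Vn := by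
      rw [hVn, hc, hg]
    rw [show m + 1 + 1 = m + 2 from rfl, hprod]
    calc |Vn - Pm * Q2| ≤ (q n : ℝ) * (1 - F (xs n)) + |α n| + |V - Pm| := key
      _ ≤ (q n : ℝ) * (1 - F (xs n)) + |α n| + m * (|α n| + (q n : ℝ) * (1 - F (xs n))) := by
          linarith
      _ = (m + 1 : ℕ) * (|α n| + (q n : ℝ) * (1 - F (xs n))) := by push_cast; ring

section SetEq

variable {Ω : Type*} [MeasurableSpace Ω]

lemma tail_set_eq (X : ℕ → Ω → ℝ) (x : ℝ) (c d sn : ℕ) :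
    {ω | ∃ j : ℕ, d + 1 ≤ j ∧ j ≤ sn ∧ x < X (c + j) ω}
      = (allLe X (Set.Icc (c + d + 1) (c + sn)) x)ᶜ := by
  ext ω
  simp only [Set.mem_setOf_eq, Set.mem_compl_iff, allLe, Set.mem_Icc, not_forall]
  constructor
  · rintro ⟨j, h1, h2, h3⟩
    refine ⟨c + j, ⟨by omega, by omega⟩, by simpa using not_le.2 h3⟩
  · rintro ⟨i, ⟨hi1, hi2⟩, hle⟩
    refine ⟨i - c, by omega, by omega, ?_⟩
    rw [show c + (i - c) = i by omega]
    exact not_le.1 (by simpa using hle)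

lemma main_set_eq (X : ℕ → Ω → ℝ) (x : ℝ) (c d sn : ℕ) (hd : d ≤ sn) :
    {ω | (∃ j : ℕ, 1 ≤ j ∧ j ≤ d ∧ x < X (c + j) ω) ∧
        ∀ j : ℕ, d + 1 ≤ j → j ≤ sn → X (c + j) ω ≤ x}
      = allLe X (Set.Icc (c + d + 1) (c + sn)) x \ allLe X (Set.Icc (c + 1) (c + sn)) x := by
  ext ω
  simp only [Set.mem_setOf_eq, Set.mem_diff, allLe, Set.mem_Icc]
  constructor
  · rintro ⟨⟨j, hj1, hj2, hj3⟩, htail⟩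
    constructor
    · intro i ⟨hi1, hi2⟩
      have := htail (i - c) (by omega) (by omega)
      rwa [show c + (i - c) = i by omega] at this
    · intro hfull
      exact absurd (hfull (c + j) ⟨by omega, by omega⟩) (not_le.2 hj3)
  · rintro ⟨htail, hnfull⟩
    rw [not_forall] at hnfull
    constructor
    · obtain ⟨i, hi⟩ := hnfull
      rw [Classical.not_imp] at hi
      obtain ⟨⟨hi1, hi2⟩, hle⟩ := hi
      have hile : i ≤ c + d := by
        by_contra hgt
        exact hle (htail i ⟨by omega, hi2⟩)
      refine ⟨i - c, by omega, by omega, ?_⟩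
      rw [show c + (i - c) = i by omega]
      exact not_le.1 hle
    · intro j hj1 hj2
      exact htail (c + j) ⟨by omega, by omega⟩

end SetEq


/-- Lemma L5.4: under the assumptions of Lemma lemOB with
`P(Mₙ ≤ xₙ) → L ∈ (0,1)`, for blocks of length `sₙ` with `pₙ = o(sₙ)`, `sₙ = o(n)`,
`tₙ = ⌊n/(sₙ+qₙ)⌋`, writing `X^i_j = X_{(i−1)(sₙ+qₙ)+j}`:
`∑_{i=1}^{tₙ} P(M^i_{0,sₙ−pₙ} > xₙ, M^i_{sₙ−pₙ,sₙ} ≤ xₙ) → −log L`,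
`∑_{i=1}^{tₙ} P(M^i_{sₙ−pₙ,sₙ} > xₙ) → 0`, and in particular the second sum is
`o`(the first sum). -/
theorem stmt13 {Ω : Type*} [MeasurableSpace Ω] (P : Measure Ω) [IsProbabilityMeasure P]
    (X : ℕ → Ω → ℝ) (F : ℝ → ℝ) (xs : ℕ → ℝ) (q : ℕ → ℕ) (α : ℕ → ℝ) (p : ℕ → ℕ)
    (τ : ℝ) (hτ : 0 < τ)
    (hmeas : ∀ i, Measurable (X i))
    (hF : ∀ i, 1 ≤ i → ∀ t : ℝ, pr P {ω | X i ω ≤ t} = F t)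
    (hqpos : ∀ m, 1 ≤ q m)
    (hq : (fun n : ℕ => (q n : ℝ)) =o[atTop] (fun n : ℕ => (n : ℝ)))
    (hα : Tendsto α atTop (nhds 0))
    (hbd : AIMBound P X xs q α)
    (hFbar : Tendsto (fun n : ℕ => (n : ℝ) * (1 - F (xs n))) atTop (nhds τ))
    (hppos : ∀ m, 1 ≤ p m)
    (hp : (fun n : ℕ => (p n : ℝ)) =o[atTop] (fun n : ℕ => (n : ℝ)))
    (hnα : (fun n : ℕ => (n : ℝ) * α n) =o[atTop] (fun n : ℕ => (p n : ℝ)))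
    (hqp : (fun n : ℕ => (q n : ℝ)) =o[atTop] (fun n : ℕ => (p n : ℝ)))
    (L : ℝ) (hL0 : 0 < L) (hL1 : L < 1)
    (hML : Tendsto (fun n => pr P (allLe X (Set.Icc 1 n) (xs n))) atTop (nhds L))
    (s : ℕ → ℕ) (hspos : ∀ m, 1 ≤ s m)
    (hps : (fun n : ℕ => (p n : ℝ)) =o[atTop] (fun n : ℕ => (s n : ℝ)))
    (hs : (fun n : ℕ => (s n : ℝ)) =o[atTop] (fun n : ℕ => (n : ℝ))) :
    Tendsto (fun n : ℕ => ∑ i ∈ Finset.Icc 1 (n / (s n + q n)),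
        pr P {ω | (∃ j : ℕ, 1 ≤ j ∧ j ≤ s n - p n ∧
            xs n < X ((i - 1) * (s n + q n) + j) ω) ∧
          ∀ j : ℕ, s n - p n + 1 ≤ j → j ≤ s n →
            X ((i - 1) * (s n + q n) + j) ω ≤ xs n})
      atTop (nhds (-Real.log L)) ∧
    Tendsto (fun n : ℕ => ∑ i ∈ Finset.Icc 1 (n / (s n + q n)),
        pr P {ω | ∃ j : ℕ, s n - p n + 1 ≤ j ∧ j ≤ s n ∧
            xs n < X ((i - 1) * (s n + q n) + j) ω})
      atTop (nhds 0) ∧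
    (fun n : ℕ => ∑ i ∈ Finset.Icc 1 (n / (s n + q n)),
        pr P {ω | ∃ j : ℕ, s n - p n + 1 ≤ j ∧ j ≤ s n ∧
            xs n < X ((i - 1) * (s n + q n) + j) ω}) =o[atTop]
      (fun n : ℕ => ∑ i ∈ Finset.Icc 1 (n / (s n + q n)),
        pr P {ω | (∃ j : ℕ, 1 ≤ j ∧ j ≤ s n - p n ∧
            xs n < X ((i - 1) * (s n + q n) + j) ω) ∧
          ∀ j : ℕ, s n - p n + 1 ≤ j → j ≤ s n →
            X ((i - 1) * (s n + q n) + j) ω ≤ xs n}) := by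
  classical
  -- notation
  set Fb : ℕ → ℝ := fun n => 1 - F (xs n) with hFbdef
  have hFb0' : ∀ n, 0 ≤ 1 - F (xs n) := by
    intro n
    have h := (hF 1 le_rfl (xs n)) ▸ (pr_le_one (P := P) (A := {ω | X 1 ω ≤ xs n}))
    linarith
  set t : ℕ → ℕ := fun n => n / (s n + q n) with htdef
  set Qb : ℕ → ℕ → ℝ := fun n i => pr P (allLe X
    (Set.Icc ((i - 1) * (s n + q n) + 1) ((i - 1) * (s n + q n) + s n)) (xs n)) with hQdef
  set Tb : ℕ → ℕ → ℝ := fun n i => pr P (allLe X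
    (Set.Icc ((i - 1) * (s n + q n) + (s n - p n) + 1) ((i - 1) * (s n + q n) + s n)) (xs n))
    with hTdef
  clear_value Fb t Qb Tb
  have hFb0 : ∀ n, 0 ≤ Fb n := by
    intro n; simp only [hFbdef]; exact hFb0' n
  have hFbar' : Tendsto (fun n : ℕ => (n : ℝ) * Fb n) atTop (nhds τ) := by
    simp only [hFbdef]; exact hFbar
  -- rewrite the two sums
  have h2eq : ∀ n, ∑ i ∈ Finset.Icc 1 (t n),
      pr P {ω | ∃ j : ℕ, s n - p n + 1 ≤ j ∧ j ≤ s n ∧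
        xs n < X ((i - 1) * (s n + q n) + j) ω}
      = ∑ i ∈ Finset.Icc 1 (t n), (1 - Tb n i) := by
    intro n
    refine Finset.sum_congr rfl fun i _ => ?_
    rw [tail_set_eq X (xs n) ((i - 1) * (s n + q n)) (s n - p n) (s n),
      pr_compl (allLe_meas hmeas _)]
    simp only [hTdef]
  have h1eq : ∀ n, ∑ i ∈ Finset.Icc 1 (t n),
      pr P {ω | (∃ j : ℕ, 1 ≤ j ∧ j ≤ s n - p n ∧
          xs n < X ((i - 1) * (s n + q n) + j) ω) ∧
        ∀ j : ℕ, s n - p n + 1 ≤ j → j ≤ s n →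
          X ((i - 1) * (s n + q n) + j) ω ≤ xs n}
      = ∑ i ∈ Finset.Icc 1 (t n), (Tb n i - Qb n i) := by
    intro n
    refine Finset.sum_congr rfl fun i _ => ?_
    rw [main_set_eq X (xs n) ((i - 1) * (s n + q n)) (s n - p n) (s n) (Nat.sub_le _ _),
      pr_diff (allLe_mono (Set.Icc_subset_Icc (by omega) le_rfl)) (allLe_meas hmeas _)]
    simp only [hTdef, hQdef]
  -- basic bounds on Qb, Tb
  have hQ0 : ∀ n i, 0 ≤ Qb n i := by
    intro n i; simp only [hQdef]; exact pr_nonneg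
  have hQ1 : ∀ n i, Qb n i ≤ 1 := by
    intro n i; simp only [hQdef]; exact pr_le_one
  have hT0 : ∀ n i, 0 ≤ Tb n i := by
    intro n i; simp only [hTdef]; exact pr_nonneg
  have hT1 : ∀ n i, Tb n i ≤ 1 := by
    intro n i; simp only [hTdef]; exact pr_le_one
  have hTbound : ∀ n i, 1 - Tb n i ≤ (p n : ℝ) * Fb n := by
    intro n i
    simp only [hTdef, hFbdef]
    have h := one_sub_pr_allLe (x := xs n) hmeas hF
      (Finset.Icc ((i - 1) * (s n + q n) + (s n - p n) + 1) ((i - 1) * (s n + q n) + s n))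
      (fun j hj => by simp only [Finset.mem_Icc] at hj; omega)
    rw [Finset.coe_Icc] at h
    have hcard : ((Finset.Icc ((i - 1) * (s n + q n) + (s n - p n) + 1)
        ((i - 1) * (s n + q n) + s n)).card : ℝ) ≤ (p n : ℝ) := by
      rw [Nat.card_Icc]
      have : (i - 1) * (s n + q n) + s n + 1 - ((i - 1) * (s n + q n) + (s n - p n) + 1)
          ≤ p n := by omega
      exact_mod_cast this
    calc 1 - pr P (allLe X (Set.Icc ((i - 1) * (s n + q n) + (s n - p n) + 1)
          ((i - 1) * (s n + q n) + s n)) (xs n)) ≤ _ := h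
      _ ≤ (p n : ℝ) * (1 - F (xs n)) := mul_le_mul_of_nonneg_right hcard (hFb0' n)
  have hQbound : ∀ n i, 1 - Qb n i ≤ (s n : ℝ) * Fb n := by
    intro n i
    simp only [hQdef, hFbdef]
    have h := one_sub_pr_allLe (x := xs n) hmeas hF
      (Finset.Icc ((i - 1) * (s n + q n) + 1) ((i - 1) * (s n + q n) + s n))
      (fun j hj => by simp only [Finset.mem_Icc] at hj; omega)
    rw [Finset.coe_Icc] at h
    have hcard : ((Finset.Icc ((i - 1) * (s n + q n) + 1)
        ((i - 1) * (s n + q n) + s n)).card : ℝ) ≤ (s n : ℝ) := by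
      rw [Nat.card_Icc]
      have : (i - 1) * (s n + q n) + s n + 1 - ((i - 1) * (s n + q n) + 1) ≤ s n := by omega
      exact_mod_cast this
    calc 1 - pr P (allLe X (Set.Icc ((i - 1) * (s n + q n) + 1)
          ((i - 1) * (s n + q n) + s n)) (xs n)) ≤ _ := h
      _ ≤ (s n : ℝ) * (1 - F (xs n)) := mul_le_mul_of_nonneg_right hcard (hFb0' n)
  -- numeric facts about t
  have hts : ∀ n, (t n : ℝ) * (s n : ℝ) ≤ (n : ℝ) := by
    intro n
    simp only [htdef]
    have h1 : n / (s n + q n) * s n ≤ n / (s n + q n) * (s n + q n) :=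
      Nat.mul_le_mul_left _ (Nat.le_add_right _ _)
    have h2 : n / (s n + q n) * (s n + q n) ≤ n := Nat.div_mul_le_self n (s n + q n)
    exact_mod_cast le_trans h1 h2
  have htns : ∀ n, (t n : ℝ) ≤ (n : ℝ) / (s n : ℝ) := by
    intro n
    rw [le_div_iff₀ (by exact_mod_cast hspos n : (0:ℝ) < (s n : ℝ))]
    exact hts n
  -- eventual inequalities
  have hqs_ev : ∀ᶠ n in atTop, q n ≤ s n := by
    have h1 := (hqp.trans hps).def one_pos
    filter_upwards [h1] with n hn
    simp only [Real.norm_natCast, one_mul] at hn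
    exact_mod_cast hn
  have hps_ev : ∀ᶠ n in atTop, p n ≤ s n := by
    have h1 := hps.def one_pos
    filter_upwards [h1] with n hn
    simp only [Real.norm_natCast, one_mul] at hn
    exact_mod_cast hn
  have ht1_ev : ∀ᶠ n in atTop, 1 ≤ t n := by
    have h1 := hs.def (c := 1/2) (by norm_num)
    have h2 := hq.def (c := 1/2) (by norm_num)
    filter_upwards [h1, h2] with n hn1 hn2
    simp only [Real.norm_natCast] at hn1 hn2
    have : (s n : ℝ) + (q n : ℝ) ≤ (n : ℝ) := by linarith
    have hkn : s n + q n ≤ n := by exact_mod_cast this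
    simp only [htdef]
    exact Nat.one_le_div_iff (by have := hspos n; have := hqpos n; omega) |>.2 hkn
  -- limits of auxiliary sequences
  have hsn0 : ∀ n, (0:ℝ) < (s n : ℝ) := fun n => by exact_mod_cast hspos n
  have hsdiv : Tendsto (fun n => (s n : ℝ) / (n : ℝ)) atTop (nhds 0) :=
    hs.tendsto_div_nhds_zero
  have hqdiv : Tendsto (fun n => (q n : ℝ) / (n : ℝ)) atTop (nhds 0) :=
    hq.tendsto_div_nhds_zero
  have hpdivs : Tendsto (fun n => (p n : ℝ) / (s n : ℝ)) atTop (nhds 0) :=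
    hps.tendsto_div_nhds_zero
  have hqdivs : Tendsto (fun n => (q n : ℝ) / (s n : ℝ)) atTop (nhds 0) :=
    (hqp.trans hps).tendsto_div_nhds_zero
  have hnαdivs : Tendsto (fun n : ℕ => ((n : ℝ) * α n) / (s n : ℝ)) atTop (nhds 0) :=
    (hnα.trans hps).tendsto_div_nhds_zero
  have hnabs : Tendsto (fun n : ℕ => ((n : ℝ) / (s n : ℝ)) * |α n|) atTop (nhds 0) := by
    have h := hnαdivs.abs
    rw [abs_zero] at h
    refine h.congr fun n => ?_
    simp only [abs_div, abs_mul, Nat.abs_cast]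
    ring
  have hsFb : Tendsto (fun n => (s n : ℝ) * Fb n) atTop (nhds 0) := by
    simp only [hFbdef]
    have h := hsdiv.mul hFbar
    rw [zero_mul] at h
    refine Tendsto.congr' ?_ h
    filter_upwards [eventually_ge_atTop 1] with n hn
    have hn0 : (n : ℝ) ≠ 0 := by positivity
    field_simp
  have hkFb : Tendsto (fun n => ((s n : ℝ) + 2 * (q n : ℝ)) * Fb n) atTop (nhds 0) := by
    simp only [hFbdef]
    have hsum : Tendsto (fun n => (s n : ℝ) / (n : ℝ) + 2 * ((q n : ℝ) / (n : ℝ)))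
        atTop (nhds 0) := by
      have := hsdiv.add (hqdiv.const_mul 2)
      simpa using this
    have h := hsum.mul hFbar
    rw [zero_mul] at h
    refine Tendsto.congr' ?_ h
    filter_upwards [eventually_ge_atTop 1] with n hn
    have hn0 : (n : ℝ) ≠ 0 := by positivity
    field_simp
  have hqFbn : Tendsto (fun n : ℕ => ((q n : ℝ) / (s n : ℝ)) * ((n : ℝ) * Fb n)) atTop (nhds 0) := by
    have := hqdivs.mul hFbar'
    simpa using this
  have hpFbn : Tendsto (fun n : ℕ => ((p n : ℝ) / (s n : ℝ)) * ((n : ℝ) * Fb n)) atTop (nhds 0) := by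
    have := hpdivs.mul hFbar'
    simpa using this
  -- the product over blocks
  set Pf : ℕ → ℝ := fun n => ∏ i ∈ Finset.Icc 1 (t n), Qb n i with hPfdef
  -- error bound between pr(allLe [1,n]) and the product
  set En : ℕ → ℝ := fun n => ((s n : ℝ) + 2 * (q n : ℝ)) * Fb n
      + ((n : ℝ) / (s n : ℝ)) * |α n| + ((q n : ℝ) / (s n : ℝ)) * ((n : ℝ) * Fb n) with hEndef
  clear_value Pf En
  have hEn0 : Tendsto En atTop (nhds 0) := by
    simp only [hEndef]
    have := (hkFb.add hnabs).add hqFbn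
    simpa using this
  have hprod_err : ∀ᶠ n in atTop,
      |Pf n - pr P (allLe X (Set.Icc 1 n) (xs n))| ≤ En n := by
    filter_upwards [hqs_ev, ht1_ev] with n hqsn ht1
    obtain ⟨t', ht'⟩ : ∃ t', t n = t' + 1 := ⟨t n - 1, by omega⟩
    have ht'' : n / (s n + q n) = t' + 1 := by simp only [htdef] at ht'; exact ht'
    have hch := chain_bound P X F xs q α hmeas hF hbd n (s n) (hspos n) hqsn t'
      (by omega)
    -- identify the product
    have hPfeq : Pf n = ∏ i ∈ Finset.Icc 1 (t' + 1), pr P (allLe X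
        (Set.Icc ((i - 1) * (s n + q n) + 1) ((i - 1) * (s n + q n) + s n)) (xs n)) := by
      simp only [hPfdef, hQdef]; rw [ht']
    rw [← hPfeq] at hch
    -- extension from t'*(k)+s to n
    set b := t' * (s n + q n) + s n with hbdef
    have hbn : b ≤ n := by
      have h2 : (t' + 1) * (s n + q n) ≤ n := by
        calc (t' + 1) * (s n + q n) = (n / (s n + q n)) * (s n + q n) := by rw [← ht'']
          _ ≤ n := Nat.div_mul_le_self n (s n + q n)
      have e1 : (t' + 1) * (s n + q n) = t' * (s n + q n) + (s n + q n) := by ring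
      omega
    have hnlt : n < (t' + 1) * (s n + q n) + (s n + q n) := by
      have hdm := Nat.div_add_mod n (s n + q n)
      rw [ht''] at hdm
      have hmod : n % (s n + q n) < s n + q n :=
        Nat.mod_lt _ (by have := hspos n; omega)
      have h5 : n < (s n + q n) * (t' + 1) + (s n + q n) := by
        calc n = (s n + q n) * (t' + 1) + n % (s n + q n) := hdm.symm
          _ < (s n + q n) * (t' + 1) + (s n + q n) := Nat.add_lt_add_left hmod _
      rw [Nat.mul_comm (s n + q n) (t' + 1)] at h5
      exact h5
    have hext : |pr P (allLe X (Set.Icc 1 n) (xs n)) - pr P (allLe X (Set.Icc 1 b) (xs n))|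
        ≤ ((s n : ℝ) + 2 * (q n : ℝ)) * Fb n := by
      simp only [hFbdef]
      have hmono : pr P (allLe X (Set.Icc 1 n) (xs n)) ≤ pr P (allLe X (Set.Icc 1 b) (xs n)) :=
        pr_mono (allLe_mono (Set.Icc_subset_Icc le_rfl hbn))
      have hd := pr_allLe_drop (x := xs n) hmeas hF (Finset.Icc 1 b) (Finset.Icc 1 n)
        (Finset.Icc_subset_Icc le_rfl hbn)
        (fun j hj => by simp only [Finset.mem_Icc] at hj; omega)
      rw [Finset.coe_Icc, Finset.coe_Icc] at hd
      have hcard : ((Finset.Icc 1 n \ Finset.Icc 1 b).card : ℝ) ≤ (s n : ℝ) + 2 * (q n : ℝ) := by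
        have hss : Finset.Icc 1 n \ Finset.Icc 1 b ⊆ Finset.Icc (b + 1) n := by
          intro j hj
          simp only [Finset.mem_sdiff, Finset.mem_Icc, not_and, not_le] at hj
          simp only [Finset.mem_Icc]
          omega
        have h1 : (Finset.Icc 1 n \ Finset.Icc 1 b).card ≤ n - b :=
          le_trans (Finset.card_le_card hss) (by rw [Nat.card_Icc]; omega)
        have h2 : n - b ≤ s n + 2 * q n := by
          have e1 : (t' + 1) * (s n + q n) = t' * (s n + q n) + (s n + q n) := by ring
          omega
        calc ((Finset.Icc 1 n \ Finset.Icc 1 b).card : ℝ) ≤ ((n - b : ℕ) : ℝ) := by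
              exact_mod_cast h1
          _ ≤ ((s n + 2 * q n : ℕ) : ℝ) := by exact_mod_cast h2
          _ = (s n : ℝ) + 2 * (q n : ℝ) := by push_cast; ring
      have hFb := hFb0' n
      have hdrop : pr P (allLe X (Set.Icc 1 b) (xs n)) ≤ pr P (allLe X (Set.Icc 1 n) (xs n))
          + ((s n : ℝ) + 2 * (q n : ℝ)) * (1 - F (xs n)) := by
        calc pr P (allLe X (Set.Icc 1 b) (xs n))
            ≤ pr P (allLe X (Set.Icc 1 n) (xs n))
              + ((Finset.Icc 1 n \ Finset.Icc 1 b).card : ℝ) * (1 - F (xs n)) := hd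
          _ ≤ _ := by
              have := mul_le_mul_of_nonneg_right hcard hFb
              linarith
      rw [abs_sub_comm, abs_of_nonneg (by linarith)]
      linarith
    -- combine
    have ht'le : (t' : ℝ) ≤ (n : ℝ) / (s n : ℝ) := by
      have : (t' : ℝ) ≤ (t n : ℝ) := by exact_mod_cast (by omega : t' ≤ t n)
      linarith [htns n]
    have hαq0 : 0 ≤ |α n| + (q n : ℝ) * Fb n :=
      add_nonneg (abs_nonneg _) (mul_nonneg (Nat.cast_nonneg _) (hFb0 n))
    have hch2 : |Pf n - pr P (allLe X (Set.Icc 1 b) (xs n))|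
        ≤ (t' : ℝ) * (|α n| + (q n : ℝ) * Fb n) := by
      simp only [hFbdef]
      rw [abs_sub_comm]
      exact hch
    have hext2 : |pr P (allLe X (Set.Icc 1 b) (xs n)) - pr P (allLe X (Set.Icc 1 n) (xs n))|
        ≤ ((s n : ℝ) + 2 * (q n : ℝ)) * Fb n := by
      rw [abs_sub_comm]
      exact hext
    have hstep : (t' : ℝ) * (|α n| + (q n : ℝ) * Fb n)
        ≤ ((n : ℝ) / (s n : ℝ)) * |α n| + ((q n : ℝ) / (s n : ℝ)) * ((n : ℝ) * Fb n) := by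
      have h1 : (t' : ℝ) * (|α n| + (q n : ℝ) * Fb n)
          ≤ ((n : ℝ) / (s n : ℝ)) * (|α n| + (q n : ℝ) * Fb n) :=
        mul_le_mul_of_nonneg_right ht'le hαq0
      have h2 : ((n : ℝ) / (s n : ℝ)) * (|α n| + (q n : ℝ) * Fb n)
          = ((n : ℝ) / (s n : ℝ)) * |α n| + ((q n : ℝ) / (s n : ℝ)) * ((n : ℝ) * Fb n) := by
        field_simp
      linarith
    calc |Pf n - pr P (allLe X (Set.Icc 1 n) (xs n))|
        ≤ |Pf n - pr P (allLe X (Set.Icc 1 b) (xs n))|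
          + |pr P (allLe X (Set.Icc 1 b) (xs n)) - pr P (allLe X (Set.Icc 1 n) (xs n))| := by
          exact abs_sub_le _ _ _
      _ ≤ (t' : ℝ) * (|α n| + (q n : ℝ) * Fb n) + ((s n : ℝ) + 2 * (q n : ℝ)) * Fb n :=
          add_le_add hch2 hext2
      _ ≤ En n := by
          simp only [hEndef]
          linarith [hstep]
  -- Pf tends to L
  have hPfL : Tendsto Pf atTop (nhds L) := by
    have hdiff : Tendsto (fun n => Pf n - pr P (allLe X (Set.Icc 1 n) (xs n))) atTop (nhds 0) :=
      squeeze_zero_norm' hprod_err hEn0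
    have := hdiff.add hML
    rw [zero_add] at this
    refine this.congr fun n => by ring
  -- S_n = sum (1 - Qb)
  set Sf : ℕ → ℝ := fun n => ∑ i ∈ Finset.Icc 1 (t n), (1 - Qb n i) with hSfdef
  clear_value Sf
  have hsFb_half : ∀ᶠ n in atTop, (s n : ℝ) * Fb n ≤ 1/2 := by
    have := hsFb.eventually (eventually_le_nhds (by norm_num : (0:ℝ) < 1/2))
    filter_upwards [this] with n hn using hn
  have hS0 : ∀ n, 0 ≤ Sf n := by
    intro n
    simp only [hSfdef]
    refine Finset.sum_nonneg fun i _ => by linarith [hQ1 n i]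
  have hSle : ∀ n, Sf n ≤ (n : ℝ) * Fb n := by
    intro n
    simp only [hSfdef]
    have h1 : (∑ i ∈ Finset.Icc 1 (t n), (1 - Qb n i)) ≤ ∑ i ∈ Finset.Icc 1 (t n), (s n : ℝ) * Fb n :=
      Finset.sum_le_sum fun i _ => hQbound n i
    rw [Finset.sum_const, Nat.card_Icc] at h1
    have h2 : ((t n + 1 - 1 : ℕ) : ℝ) • ((s n : ℝ) * Fb n) = (t n : ℝ) * ((s n : ℝ) * Fb n) := by
      norm_num
    have h3 : (t n : ℝ) * ((s n : ℝ) * Fb n) ≤ (n : ℝ) * Fb n := by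
      rw [← mul_assoc]
      exact mul_le_mul_of_nonneg_right (hts n) (hFb0 n)
    calc (∑ i ∈ Finset.Icc 1 (t n), (1 - Qb n i)) ≤ _ := h1
      _ = (t n : ℝ) * ((s n : ℝ) * Fb n) := by rw [nsmul_eq_mul]; norm_num
      _ ≤ (n : ℝ) * Fb n := h3
  have hlog_err : ∀ᶠ n in atTop,
      |Sf n + Real.log (Pf n)| ≤ 2 * ((s n : ℝ) * Fb n) * ((n : ℝ) * Fb n) := by
    filter_upwards [hsFb_half] with n hhalf
    have hQhalf : ∀ i ∈ Finset.Icc 1 (t n), 1/2 ≤ Qb n i := by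
      intro i _
      have h7 := hQbound n i
      nlinarith [h7, hhalf]
    have hQpos : ∀ i ∈ Finset.Icc 1 (t n), Qb n i ≠ 0 := by
      intro i hi
      have h5 := hQhalf i hi
      exact ne_of_gt (lt_of_lt_of_le (by norm_num) h5)
    have hlogprod : Real.log (Pf n) = ∑ i ∈ Finset.Icc 1 (t n), Real.log (Qb n i) := by
      simp only [hPfdef]
      exact Real.log_prod hQpos
    rw [hlogprod, hSfdef]
    dsimp only
    rw [← Finset.sum_add_distrib]
    calc |∑ i ∈ Finset.Icc 1 (t n), ((1 - Qb n i) + Real.log (Qb n i))|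
        ≤ ∑ i ∈ Finset.Icc 1 (t n), |(1 - Qb n i) + Real.log (Qb n i)| :=
          Finset.abs_sum_le_sum_abs _ _
      _ ≤ ∑ i ∈ Finset.Icc 1 (t n), 2 * ((s n : ℝ) * Fb n) * (1 - Qb n i) := by
          refine Finset.sum_le_sum fun i hi => ?_
          have h1 := log_near (hQhalf i hi) (hQ1 n i)
          have h2 : (1 - Qb n i)^2 ≤ ((s n : ℝ) * Fb n) * (1 - Qb n i) := by
            have h3 : 0 ≤ 1 - Qb n i := by linarith [hQ1 n i]
            have := hQbound n i
            nlinarith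
          calc |(1 - Qb n i) + Real.log (Qb n i)| ≤ 2 * (1 - Qb n i)^2 := h1
            _ ≤ 2 * ((s n : ℝ) * Fb n) * (1 - Qb n i) := by nlinarith
      _ = 2 * ((s n : ℝ) * Fb n) * Sf n := by
          simp only [hSfdef]
          rw [Finset.mul_sum]
      _ ≤ 2 * ((s n : ℝ) * Fb n) * ((n : ℝ) * Fb n) := by
          have h4 : 0 ≤ 2 * ((s n : ℝ) * Fb n) :=
            mul_nonneg (by norm_num) (mul_nonneg (Nat.cast_nonneg _) (hFb0 n))
          exact mul_le_mul_of_nonneg_left (hSle n) h4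
  have hlog_bnd0 : Tendsto (fun n => 2 * ((s n : ℝ) * Fb n) * ((n : ℝ) * Fb n)) atTop (nhds 0) := by
    have := (hsFb.const_mul 2).mul hFbar'
    simpa using this
  have hSsum0 : Tendsto (fun n => Sf n + Real.log (Pf n)) atTop (nhds 0) :=
    squeeze_zero_norm' hlog_err hlog_bnd0
  have hlogPf : Tendsto (fun n => Real.log (Pf n)) atTop (nhds (Real.log L)) :=
    ((Real.continuousAt_log (ne_of_gt hL0)).tendsto.comp hPfL)
  have hSf : Tendsto Sf atTop (nhds (-Real.log L)) := by
    have := hSsum0.sub hlogPf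
    rw [zero_sub] at this
    refine this.congr fun n => by ring
  -- sum2 tends to 0
  have hsum2_0 : Tendsto (fun n => ∑ i ∈ Finset.Icc 1 (t n), (1 - Tb n i)) atTop (nhds 0) := by
    have h0 : ∀ᶠ n in atTop, 0 ≤ ∑ i ∈ Finset.Icc 1 (t n), (1 - Tb n i) :=
      Eventually.of_forall fun n =>
        Finset.sum_nonneg fun i _ => by linarith [hT1 n i]
    have hle : ∀ᶠ n in atTop, ∑ i ∈ Finset.Icc 1 (t n), (1 - Tb n i)
        ≤ ((p n : ℝ) / (s n : ℝ)) * ((n : ℝ) * Fb n) := by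
      refine Eventually.of_forall fun n => ?_
      have h1 : ∑ i ∈ Finset.Icc 1 (t n), (1 - Tb n i)
          ≤ ∑ i ∈ Finset.Icc 1 (t n), (p n : ℝ) * Fb n :=
        Finset.sum_le_sum fun i _ => hTbound n i
      rw [Finset.sum_const, Nat.card_Icc, nsmul_eq_mul] at h1
      have he : (t n + 1 - 1 : ℕ) = t n := by omega
      rw [he] at h1
      have hpFb0 : 0 ≤ (p n : ℝ) * Fb n :=
        mul_nonneg (Nat.cast_nonneg _) (hFb0 n)
      have h3 : (t n : ℝ) * ((p n : ℝ) * Fb n)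
          ≤ ((n : ℝ) / (s n : ℝ)) * ((p n : ℝ) * Fb n) :=
        mul_le_mul_of_nonneg_right (htns n) hpFb0
      have h4 : ((n : ℝ) / (s n : ℝ)) * ((p n : ℝ) * Fb n)
          = ((p n : ℝ) / (s n : ℝ)) * ((n : ℝ) * Fb n) := by
        field_simp
      nlinarith [h1, h3, h4]
    exact squeeze_zero' h0 hle hpFbn
  -- sum1 tends to -log L
  have hsum1 : Tendsto (fun n => ∑ i ∈ Finset.Icc 1 (t n), (Tb n i - Qb n i)) atTop
      (nhds (-Real.log L)) := by
    have hEq : ∀ n, ∑ i ∈ Finset.Icc 1 (t n), (Tb n i - Qb n i)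
        = Sf n - ∑ i ∈ Finset.Icc 1 (t n), (1 - Tb n i) := by
      intro n
      rw [hSfdef]
      dsimp only
      rw [← Finset.sum_sub_distrib]
      exact Finset.sum_congr rfl fun i _ => by ring
    have := hSf.sub hsum2_0
    rw [sub_zero] at this
    exact Tendsto.congr (fun n => (hEq n).symm) this
  -- littleO
  have hsum1' : Tendsto (fun n : ℕ => ∑ i ∈ Finset.Icc 1 (t n),
      pr P {ω | (∃ j : ℕ, 1 ≤ j ∧ j ≤ s n - p n ∧
          xs n < X ((i - 1) * (s n + q n) + j) ω) ∧
        ∀ j : ℕ, s n - p n + 1 ≤ j → j ≤ s n →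
          X ((i - 1) * (s n + q n) + j) ω ≤ xs n}) atTop (nhds (-Real.log L)) :=
    Tendsto.congr (fun n => (h1eq n).symm) hsum1
  have hsum2' : Tendsto (fun n : ℕ => ∑ i ∈ Finset.Icc 1 (t n),
      pr P {ω | ∃ j : ℕ, s n - p n + 1 ≤ j ∧ j ≤ s n ∧
          xs n < X ((i - 1) * (s n + q n) + j) ω}) atTop (nhds 0) :=
    Tendsto.congr (fun n => (h2eq n).symm) hsum2_0
  simp only [htdef] at hsum1' hsum2'
  refine ⟨hsum1', hsum2', ?_⟩
  have hlogneg : Real.log L < 0 := Real.log_neg hL0 hL1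
  have hlittle : (fun n : ℕ => ∑ i ∈ Finset.Icc 1 (n / (s n + q n)),
      pr P {ω | ∃ j : ℕ, s n - p n + 1 ≤ j ∧ j ≤ s n ∧
          xs n < X ((i - 1) * (s n + q n) + j) ω}) =o[atTop] (fun _ : ℕ => (1:ℝ)) :=
    (Asymptotics.isLittleO_one_iff ℝ).2 hsum2'
  have hbigO : (fun _ : ℕ => (1:ℝ)) =O[atTop] (fun n : ℕ => ∑ i ∈ Finset.Icc 1 (n / (s n + q n)),
      pr P {ω | (∃ j : ℕ, 1 ≤ j ∧ j ≤ s n - p n ∧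
          xs n < X ((i - 1) * (s n + q n) + j) ω) ∧
        ∀ j : ℕ, s n - p n + 1 ≤ j → j ≤ s n →
          X ((i - 1) * (s n + q n) + j) ω ≤ xs n}) := by
    apply IsBigO.of_bound (2 / (-Real.log L))
    have hx : (0:ℝ) < -Real.log L := by linarith
    have hev := hsum1'.eventually (eventually_ge_nhds
      (by linarith : (-Real.log L)/2 < -Real.log L))
    filter_upwards [hev] with n hn
    rw [norm_one, Real.norm_eq_abs, abs_of_nonneg (by linarith)]
    calc (1:ℝ) = 2 / (-Real.log L) * ((-Real.log L)/2) := by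
          have hne : Real.log L ≠ 0 := ne_of_lt hlogneg
          field_simp
      _ ≤ _ := mul_le_mul_of_nonneg_left hn (by positivity)
  exact hlittle.trans_isBigO hbigO
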